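/- Let α, β > −1, let n ≥ 1 and let x_1, …, x_n be pairwise distinct real numbers in (−1, 1). Then the Stieltjes electrostatic equilibrium ∑_{k≠i} 1/(x_k − x_i) = (α+1)/(2(x_i − 1)) + (β+1)/(2(x_i + 1)) holds for all 1 ≤ i ≤ n if and only if there exists λ ∈ ℝ such that the polynomial y(x) = ∏_{k=1}^n (x − x_k) satisfies (1 − x²)·y''(x) + (β − α − (α+β+2)x)·y'(x) + λ·y(x) = 0 identically. -/
import Mathlib

open Polynomial Finset

lemma my_derivative_prod {ι : Type*} [DecidableEq ι] (s : Finset ι) (f : ι → Polynomial ℝ) :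
    derivative (∏ i ∈ s, f i) = ∑ i ∈ s, (∏ j ∈ s.erase i, f j) * derivative (f i) := by
  induction s using Finset.induction_on with
  | empty => simp
  | @insert a s ha ih =>
      rw [Finset.prod_insert ha, derivative_mul, ih, Finset.sum_insert ha,
        Finset.erase_insert ha, Finset.mul_sum]
      congr 1
      · ring
      · refine Finset.sum_congr rfl fun i hi => ?_
        rw [Finset.erase_insert_of_ne (by rintro rfl; exact ha hi),
          Finset.prod_insert (fun h => ha (Finset.mem_of_mem_erase h))]
        ring

lemma my_eval_deriv_prod {ι : Type*} [DecidableEq ι] (s : Finset ι) (g : ι → ℝ) (t : ℝ)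
    (h : ∀ k ∈ s, g k ≠ t) :
    eval t (derivative (∏ k ∈ s, (X - C (g k))))
      = (∏ k ∈ s, (t - g k)) * ∑ j ∈ s, 1 / (t - g j) := by
  rw [my_derivative_prod, eval_finset_sum, Finset.mul_sum]
  refine Finset.sum_congr rfl fun j hj => ?_
  have hne : t - g j ≠ 0 := sub_ne_zero.mpr fun e => h j hj e.symm
  have hsplit : (∏ k ∈ s, (t - g k)) = (t - g j) * ∏ k ∈ s.erase j, (t - g k) :=
    (Finset.mul_prod_erase s _ hj).symm
  simp only [eval_mul, eval_prod, eval_sub, eval_X, eval_C, derivative_sub, derivative_X,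
    derivative_C, eval_one, mul_one, sub_zero]
  rw [hsplit]
  field_simp

theorem stmt_12 (α β : ℝ) (hα : -1 < α) (hβ : -1 < β)
    (n : ℕ) (hn : 1 ≤ n) (x : Fin n → ℝ) (hx : Function.Injective x)
    (hmem : ∀ i, x i ∈ Set.Ioo (-1 : ℝ) 1) :
    (∀ i : Fin n, ∑ k ∈ univ.erase i, 1 / (x k - x i)
        = (α + 1) / (2 * (x i - 1)) + (β + 1) / (2 * (x i + 1))) ↔
    (∃ lam : ℝ,
      (1 - X ^ 2) * derivative (derivative (∏ k, (X - C (x k))))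
        + (C (β - α) - C (α + β + 2) * X) * derivative (∏ k, (X - C (x k)))
        + C lam * ∏ k, (X - C (x k)) = 0) := by
  set y : Polynomial ℝ := ∏ k, (X - C (x k)) with hy
  have hmonic : y.Monic := monic_prod_of_monic _ _ fun k _ => monic_X_sub_C _
  have hydeg : y.natDegree = n := by
    rw [hy, natDegree_prod _ _ (fun k _ => X_sub_C_ne_zero _)]
    simp
  have hPne : ∀ i : Fin n, (∏ k ∈ univ.erase i, (x i - x k)) ≠ 0 := by
    intro i
    refine Finset.prod_ne_zero_iff.mpr fun k hk => sub_ne_zero.mpr fun e => ?_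
    exact (Finset.mem_erase.mp hk).1 (hx e).symm
  have hkey : ∀ i : Fin n,
      (eval (x i) y = 0) ∧
      (eval (x i) (derivative y) = ∏ k ∈ univ.erase i, (x i - x k)) ∧
      (eval (x i) (derivative (derivative y))
        = 2 * (∏ k ∈ univ.erase i, (x i - x k)) * ∑ j ∈ univ.erase i, 1 / (x i - x j)) := by
    intro i
    have hne : ∀ k ∈ univ.erase i, x k ≠ x i := fun k hk e =>
      (Finset.mem_erase.mp hk).1 (hx e)
    have hsplit : y = (X - C (x i)) * ∏ k ∈ univ.erase i, (X - C (x k)) := by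
      rw [hy, ← Finset.mul_prod_erase univ _ (mem_univ i)]
    refine ⟨?_, ?_, ?_⟩
    · simp [hsplit]
    · rw [hsplit, derivative_mul]
      simp [eval_prod]
    · rw [hsplit]
      simp only [derivative_mul, derivative_sub, derivative_X, derivative_C, sub_zero, one_mul,
        derivative_add, derivative_one, zero_mul, zero_add, add_zero, eval_add, eval_mul,
        eval_sub, eval_X, eval_C, sub_self, mul_zero]
      rw [my_eval_deriv_prod _ _ _ hne]
      ring
  have hiff : ∀ i : Fin n,
      (∑ k ∈ univ.erase i, 1 / (x k - x i)
          = (α + 1) / (2 * (x i - 1)) + (β + 1) / (2 * (x i + 1))) ↔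
      2 * (1 - (x i) ^ 2) * (∑ j ∈ univ.erase i, 1 / (x i - x j))
          + (β - α - (α + β + 2) * x i) = 0 := by
    intro i
    have h1 : x i - 1 ≠ 0 := sub_ne_zero.mpr (ne_of_lt (hmem i).2)
    have h2 : x i + 1 ≠ 0 := by have := (hmem i).1; intro e; linarith
    have hTS : ∑ k ∈ univ.erase i, 1 / (x k - x i)
        = -∑ j ∈ univ.erase i, 1 / (x i - x j) := by
      rw [← Finset.sum_neg_distrib]
      refine Finset.sum_congr rfl fun k _ => ?_
      rw [← neg_sub (x i) (x k), div_neg]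
    rw [hTS]
    have h12 : (1 : ℝ) - (x i) ^ 2 ≠ 0 := by
      have hm : (x i - 1) * (x i + 1) ≠ 0 := mul_ne_zero h1 h2
      intro e
      apply hm
      nlinarith
    have h3 : (2 : ℝ) * (1 - (x i) ^ 2) ≠ 0 := mul_ne_zero two_ne_zero h12
    have hfact : (α + 1) / (2 * (x i - 1)) + (β + 1) / (2 * (x i + 1))
        = (β - α - (α + β + 2) * x i) / (2 * (1 - (x i) ^ 2)) := by
      field_simp
      ring
    rw [hfact, eq_div_iff h3]
    constructor <;> intro hh <;> linear_combination -hh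
  constructor
  · intro h
    set p : Polynomial ℝ := (1 - X ^ 2) * derivative (derivative y)
        + (C (β - α) - C (α + β + 2) * X) * derivative y with hp
    refine ⟨-(p.coeff n), ?_⟩
    set r : Polynomial ℝ := p + C (-(p.coeff n)) * y with hr
    have hd1 : ((1 - X ^ 2 : Polynomial ℝ) * derivative (derivative y)).natDegree ≤ n := by
      rcases eq_or_ne (derivative (derivative y)) 0 with h0 | h0
      · simp [h0]
      · have h2n : 2 ≤ n := by
          by_contra hlt
          have hn1 : n = 1 := by omega
          have : (derivative y).natDegree ≤ 0 := by
            have := natDegree_derivative_le y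
            omega
          have : derivative y = C ((derivative y).coeff 0) :=
            eq_C_of_natDegree_le_zero this
          exact h0 (by rw [this, derivative_C])
        refine natDegree_mul_le.trans ?_
        have ha : ((1 : Polynomial ℝ) - X ^ 2).natDegree ≤ 2 := by
          compute_degree
        have hb : (derivative (derivative y)).natDegree ≤ n - 2 := by
          have := natDegree_derivative_le (derivative y)
          have := natDegree_derivative_le y
          omega
        omega
    have hd2 : ((C (β - α) - C (α + β + 2) * X) * derivative y).natDegree ≤ n := by
      refine natDegree_mul_le.trans ?_
      have ha : (C (β - α) - C (α + β + 2) * X).natDegree ≤ 1 := by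
        compute_degree
      have hb : (derivative y).natDegree ≤ n - 1 := by
        have := natDegree_derivative_le y
        omega
      omega
    have hd3 : (C (-(p.coeff n)) * y).natDegree ≤ n := by
      refine natDegree_mul_le.trans ?_
      simp [hydeg]
    have hrle : r.natDegree ≤ n :=
      (natDegree_add_le _ _).trans (max_le ((natDegree_add_le _ _).trans (max_le hd1 hd2)) hd3)
    have hycoeff : y.coeff n = 1 := by rw [← hydeg]; exact hmonic.coeff_natDegree
    have hcoeff : r.coeff n = 0 := by
      rw [hr]
      simp [coeff_add, coeff_C_mul, hycoeff]
    have heval : ∀ i : Fin n, r.eval (x i) = 0 := by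
      intro i
      obtain ⟨h0, h1', h2'⟩ := hkey i
      have E := (hiff i).mp (h i)
      rw [hr, hp]
      simp only [eval_add, eval_mul, eval_sub, eval_one, eval_pow, eval_X, eval_C, h0, h1', h2',
        mul_zero, add_zero]
      linear_combination (∏ k ∈ univ.erase i, (x i - x k)) * E
    have hr0 : r = 0 := by
      rcases eq_or_ne r 0 with h0 | h0
      · exact h0
      · have hlt : r.natDegree < n := by
          rcases lt_or_eq_of_le hrle with h' | h'
          · exact h'
          · exfalso
            have := leadingCoeff_ne_zero.mpr h0
            rw [leadingCoeff, h'] at this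
            exact this hcoeff
        exact eq_zero_of_natDegree_lt_card_of_eval_eq_zero r hx heval (by simpa using hlt)
      -- done
    calc (1 - X ^ 2) * derivative (derivative y)
          + (C (β - α) - C (α + β + 2) * X) * derivative y + C (-(p.coeff n)) * y = r := by
          rw [hr, hp]
      _ = 0 := hr0
  · rintro ⟨lam, hlam⟩ i
    obtain ⟨h0, h1', h2'⟩ := hkey i
    have := congrArg (eval (x i)) hlam
    simp only [eval_add, eval_mul, eval_sub, eval_one, eval_pow, eval_X, eval_C, h0, h1', h2',
      mul_zero, add_zero, eval_zero] at this
    have hfac : (∏ k ∈ univ.erase i, (x i - x k)) *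
        (2 * (1 - (x i) ^ 2) * (∑ j ∈ univ.erase i, 1 / (x i - x j))
          + (β - α - (α + β + 2) * x i)) = 0 := by
      linear_combination this
    exact (hiff i).mpr ((mul_eq_zero.mp hfac).resolve_left (hPne i))
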